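/- arXiv:1401.1703 — 2 statements merged into one kernel-verified Lean document; each statement's English description precedes it below -/
import Mathlib

section
/- For every natural number k and every z ≠ 0, the k-th derivative of the entire function z ↦ J₁(z)/z is given by d^k/dz^k [J₁(z)/z] = 2·(-1)^k·k!·∑_{i=0}^{⌊k/2⌋} (-1)^i/(i!·(k-2i)!) · J_{k+1-i}(z)/(2z)^{i+1}. -/
open Real Finset

/-- The Bessel function of the first kind of nonnegative integer order `ν`. -/
noncomputable def besselJ (ν : ℕ) (z : ℝ) : ℝ :=
  ∑' m : ℕ, (-1)^m * (z / 2)^(2 * m + ν) /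
    ((m.factorial : ℝ) * Real.Gamma ((m : ℝ) + ν + 1))

/-- The entire extension of `J₁(z)/z`. -/
noncomputable def besselJ1div (z : ℝ) : ℝ :=
  ∑' m : ℕ, (-1)^m * z^(2 * m) /
    (2^(2 * m + 1) * (m.factorial : ℝ) * ((m+1).factorial : ℝ))

/-- The term of the Bessel series, in factorial form. -/
noncomputable def bTerm (ν : ℕ) (z : ℝ) (m : ℕ) : ℝ :=
  (-1)^m * (z / 2)^(2 * m + ν) / ((m.factorial : ℝ) * ((m + ν).factorial : ℝ))

lemma besselJ_eq (ν : ℕ) (z : ℝ) : besselJ ν z = ∑' m : ℕ, bTerm ν z m := by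
  unfold besselJ bTerm
  congr 1; funext m
  have : ((m : ℝ) + ν + 1) = ((m + ν : ℕ) : ℝ) + 1 := by push_cast; ring
  rw [this, Real.Gamma_nat_eq_factorial]

lemma bTerm_summable (ν : ℕ) (z : ℝ) : Summable (bTerm ν z) := by
  set Q : ℝ := max 1 |z / 2| with hQ
  have hQ1 : (1:ℝ) ≤ Q := le_max_left _ _
  have hQ0 : (0:ℝ) ≤ Q := le_trans zero_le_one hQ1
  have hzQ : |z / 2| ≤ Q := le_max_right _ _
  refine Summable.of_norm_bounded (g := fun m => Q ^ ν * (Q ^ 2) ^ m / m.factorial) ?_ ?_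
  · simpa [mul_div_assoc] using (Real.summable_pow_div_factorial (Q ^ 2)).mul_left (Q ^ ν)
  · intro m
    have hfac1 : (1:ℝ) ≤ ((m + ν).factorial : ℝ) := by
      exact_mod_cast Nat.one_le_iff_ne_zero.mpr (Nat.factorial_ne_zero _)
    have hfacm : (0:ℝ) < (m.factorial : ℝ) := by positivity
    have h1 : ‖bTerm ν z m‖ = |z / 2| ^ (2 * m + ν) / ((m.factorial : ℝ) * ((m + ν).factorial : ℝ)) := by
      unfold bTerm
      rw [Real.norm_eq_abs, abs_div, abs_mul, abs_pow, abs_pow, abs_neg, abs_one, one_pow,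
        one_mul, abs_of_nonneg (by positivity : (0:ℝ) ≤ (m.factorial : ℝ) * ((m + ν).factorial : ℝ))]
    rw [h1]
    have h3 : Q ^ (2 * m + ν) = Q ^ ν * (Q ^ 2) ^ m := by
      rw [← pow_mul, ← pow_add]; ring_nf
    calc |z / 2| ^ (2 * m + ν) / ((m.factorial : ℝ) * ((m + ν).factorial : ℝ))
        ≤ Q ^ (2 * m + ν) / ((m.factorial : ℝ) * 1) := by
          gcongr
      _ = Q ^ ν * (Q ^ 2) ^ m / (m.factorial : ℝ) := by rw [h3, mul_one]

/-- Termwise derivative of the Bessel series. -/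
noncomputable def bDeriv (ν : ℕ) (z : ℝ) (m : ℕ) : ℝ :=
  (-1)^m * (((2 * m + ν : ℕ) : ℝ) * (z / 2)^(2 * m + ν - 1) / 2) /
    ((m.factorial : ℝ) * ((m + ν).factorial : ℝ))

lemma bTerm_hasDerivAt (ν m : ℕ) (z : ℝ) :
    HasDerivAt (fun w => bTerm ν w m) (bDeriv ν z m) z := by
  have h : HasDerivAt (fun w : ℝ => (w / 2)^(2 * m + ν))
      (((2 * m + ν : ℕ) : ℝ) * (z / 2)^(2 * m + ν - 1) * (1 / 2)) z :=
    ((hasDerivAt_id z).div_const 2).pow _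
  have h2 := (h.const_mul ((-1:ℝ)^m)).div_const ((m.factorial : ℝ) * ((m + ν).factorial : ℝ))
  refine h2.congr_deriv ?_
  unfold bDeriv; ring

lemma bDeriv_norm_le (ν m : ℕ) {Q y : ℝ} (hQ1 : 1 ≤ Q) (hy : |y / 2| ≤ Q) :
    ‖bDeriv ν y m‖ ≤ (2 + ν) * Q ^ ν * (2 * Q ^ 2) ^ m / m.factorial := by
  have hQ0 : (0:ℝ) < Q := lt_of_lt_of_le one_pos hQ1
  have hfac1 : (1:ℝ) ≤ ((m + ν).factorial : ℝ) := by
    exact_mod_cast Nat.one_le_iff_ne_zero.mpr (Nat.factorial_ne_zero _)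
  have hnorm : ‖bDeriv ν y m‖ = ((2 * m + ν : ℕ) : ℝ) * |y / 2| ^ (2 * m + ν - 1) / 2 /
      ((m.factorial : ℝ) * ((m + ν).factorial : ℝ)) := by
    unfold bDeriv
    rw [Real.norm_eq_abs, abs_div, abs_mul, abs_pow, abs_neg, abs_one, one_pow, one_mul,
      abs_div, abs_mul, abs_pow, Nat.abs_cast,
      abs_of_nonneg (by norm_num : (0:ℝ) ≤ 2),
      abs_of_nonneg (by positivity : (0:ℝ) ≤ (m.factorial : ℝ) * ((m + ν).factorial : ℝ))]
  rw [hnorm]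
  have h2 : |y / 2| ^ (2 * m + ν - 1) ≤ Q ^ (2 * m + ν) := by
    calc |y / 2| ^ (2 * m + ν - 1) ≤ Q ^ (2 * m + ν - 1) :=
          pow_le_pow_left₀ (abs_nonneg _) hy _
      _ ≤ Q ^ (2 * m + ν) := pow_le_pow_right₀ hQ1 (Nat.sub_le _ _)
  have h3 : ((2 * m + ν : ℕ) : ℝ) ≤ (2 + ν) * 2 ^ m := by
    have hm : (m : ℝ) + 1 ≤ 2 ^ m := by exact_mod_cast m.lt_two_pow_self
    push_cast
    nlinarith [Nat.cast_nonneg (α := ℝ) ν]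
  calc ((2 * m + ν : ℕ) : ℝ) * |y / 2| ^ (2 * m + ν - 1) / 2 /
      ((m.factorial : ℝ) * ((m + ν).factorial : ℝ))
      ≤ ((2 + ν) * 2 ^ m) * Q ^ (2 * m + ν) / 1 / ((m.factorial : ℝ) * 1) := by
        gcongr <;> first | exact h2 | exact h3 | exact hfac1 | norm_num | positivity
    _ = (2 + ν) * Q ^ ν * (2 * Q ^ 2) ^ m / m.factorial := by
        rw [mul_pow, ← pow_mul, pow_add]; ring

lemma u_summable (ν : ℕ) (Q : ℝ) :
    Summable (fun m : ℕ => (2 + ν) * Q ^ ν * (2 * Q ^ 2) ^ m / m.factorial) := by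
  simpa [mul_div_assoc] using
    (Real.summable_pow_div_factorial (2 * Q ^ 2)).mul_left ((2 + ν) * Q ^ ν)

lemma bDeriv_summable (ν : ℕ) (z : ℝ) : Summable (bDeriv ν z) := by
  set Q : ℝ := max 1 |z / 2| with hQdef
  exact Summable.of_norm_bounded (u_summable ν Q)
    (fun m => bDeriv_norm_le ν m (le_max_left _ _) (le_max_right _ _))

/-- The shifted part of the termwise derivative. -/
noncomputable def eTerm (ν : ℕ) (z : ℝ) (m : ℕ) : ℝ :=
  (-1)^m * ((m : ℝ) * (z / 2)^(2 * m + ν - 1)) / ((m.factorial : ℝ) * ((m + ν).factorial : ℝ))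

lemma bDeriv_split (ν m : ℕ) {z : ℝ} (hz : z ≠ 0) :
    bDeriv ν z m = (ν / z) * bTerm ν z m + eTerm ν z m := by
  unfold bDeriv bTerm eTerm
  rcases Nat.eq_zero_or_eq_succ_pred (2 * m + ν) with h | h
  · have hm : m = 0 := by omega
    have hν : ν = 0 := by omega
    subst hm; subst hν; norm_num
  · rw [h]
    have hpow : (z / 2) ^ (2 * m + ν).pred.succ = (z / 2) ^ (2 * m + ν).pred * (z / 2) := by
      rw [pow_succ]
    have hsub : (2 * m + ν).pred.succ - 1 = (2 * m + ν).pred := rfl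
    rw [hsub, hpow]
    have hcast : (((2 * m + ν : ℕ)) : ℝ) = 2 * m + ν := by push_cast; ring
    rw [h] at hcast
    rw [hcast]
    have hfac : (0:ℝ) < (m.factorial : ℝ) * ((m + ν).factorial : ℝ) := by positivity
    field_simp
    ring

lemma eTerm_summable (ν : ℕ) {z : ℝ} (hz : z ≠ 0) : Summable (eTerm ν z) := by
  have h : eTerm ν z = fun m => bDeriv ν z m - (ν / z) * bTerm ν z m := by
    funext m; rw [bDeriv_split ν m hz]; ring
  rw [h]
  exact (bDeriv_summable ν z).sub ((bTerm_summable ν z).mul_left _)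

lemma eTerm_succ (ν m : ℕ) (z : ℝ) : eTerm ν z (m + 1) = -bTerm (ν + 1) z m := by
  unfold eTerm bTerm
  have h1 : 2 * (m + 1) + ν - 1 = 2 * m + (ν + 1) := by omega
  have h2 : m + 1 + ν = m + (ν + 1) := by omega
  rw [h1, h2]
  have h3 : ((m+1).factorial : ℝ) = (m + 1) * (m.factorial : ℝ) := by
    push_cast [Nat.factorial_succ]; ring
  rw [pow_succ, h3]
  have : ((m:ℝ) + 1) ≠ 0 := by positivity
  field_simp
  push_cast
  ring

lemma besselJ_hasDerivAt (ν : ℕ) {z : ℝ} (hz : z ≠ 0) :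
    HasDerivAt (besselJ ν) ((ν / z) * besselJ ν z - besselJ (ν + 1) z) z := by
  set Q : ℝ := max 1 ((|z| + 1) / 2) with hQdef
  have hQ1 : (1:ℝ) ≤ Q := le_max_left _ _
  have hzmem : z ∈ Metric.ball (0:ℝ) (|z| + 1) := by
    simp only [Metric.mem_ball, Real.dist_eq, sub_zero]
    linarith [abs_nonneg z]
  have key : HasDerivAt (fun w => ∑' m, bTerm ν w m) (∑' m, bDeriv ν z m) z := by
    refine hasDerivAt_tsum_of_isPreconnected (u_summable ν Q)
      Metric.isOpen_ball (convex_ball (0:ℝ) (|z| + 1)).isPreconnected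
      (fun m y _ => bTerm_hasDerivAt ν m y)
      (fun m y hy => ?_) hzmem (bTerm_summable ν z) hzmem
    apply bDeriv_norm_le ν m hQ1
    have hyb : |y| < |z| + 1 := by
      simpa only [Metric.mem_ball, Real.dist_eq, sub_zero] using hy
    calc |y / 2| = |y| / 2 := by rw [abs_div]; norm_num
      _ ≤ (|z| + 1) / 2 := by linarith
      _ ≤ Q := le_max_right _ _
  have hval : (∑' m, bDeriv ν z m) = (ν / z) * besselJ ν z - besselJ (ν + 1) z := by
    have h1 : (∑' m, bDeriv ν z m) =
        ∑' m, ((ν / z) * bTerm ν z m + eTerm ν z m) := by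
      congr 1; funext m; exact bDeriv_split ν m hz
    rw [h1, Summable.tsum_add ((bTerm_summable ν z).mul_left _) (eTerm_summable ν hz),
      tsum_mul_left, ← besselJ_eq]
    have h2 : (∑' m, eTerm ν z m) = -besselJ (ν + 1) z := by
      rw [Summable.tsum_eq_zero_add (eTerm_summable ν hz)]
      have h0 : eTerm ν z 0 = 0 := by unfold eTerm; norm_num
      have hs : (∑' m, eTerm ν z (m + 1)) = ∑' m, -bTerm (ν + 1) z m := by
        congr 1; funext m; exact eTerm_succ ν m z
      rw [h0, hs, tsum_neg, ← besselJ_eq, zero_add]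
    rw [h2]; ring
  exact (hval ▸ key).congr_of_eventuallyEq
    (Filter.Eventually.of_forall fun w => besselJ_eq ν w)

lemma besselJ1_eq_mul (z : ℝ) : besselJ 1 z = z * besselJ1div z := by
  rw [besselJ_eq]
  unfold besselJ1div
  rw [← tsum_mul_left]
  congr 1; funext m
  unfold bTerm
  have h2 : (z / 2) ^ (2 * m + 1) = z ^ (2 * m + 1) / 2 ^ (2 * m + 1) := div_pow z 2 _
  rw [h2]
  have hm : (0:ℝ) < (m.factorial : ℝ) := by positivity
  have hm1 : (0:ℝ) < ((m+1).factorial : ℝ) := by positivity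
  rw [pow_succ z (2*m)]
  field_simp

lemma besselJ1div_eq {z : ℝ} (hz : z ≠ 0) : besselJ1div z = besselJ 1 z / z := by
  rw [besselJ1_eq_mul, mul_comm, mul_div_assoc, div_self hz, mul_one]

lemma term_hasDerivAt (ν i : ℕ) {z : ℝ} (hz : z ≠ 0) :
    HasDerivAt (fun w => besselJ ν w / (2 * w)^(i + 1))
      (((ν : ℝ) - (i + 1)) / z * (besselJ ν z / (2 * z)^(i + 1))
        - besselJ (ν + 1) z / (2 * z)^(i + 1)) z := by
  have h1 := besselJ_hasDerivAt ν hz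
  have h2 : HasDerivAt (fun w : ℝ => (2 * w)^(i + 1)) (((i:ℝ) + 1) * (2 * z)^i * 2) z := by
    have := ((hasDerivAt_id z).const_mul (2:ℝ)).pow (i + 1)
    simpa [Pi.pow_def, Nat.succ_sub_one, mul_comm, mul_assoc, mul_left_comm] using this
  have hne : (2 * z)^(i + 1) ≠ 0 := pow_ne_zero _ (by simpa using hz)
  have h3 := h1.div h2 hne
  refine h3.congr_deriv ?_
  have h2z : (2 * z) ≠ 0 := by simpa using hz
  field_simp
  ring


noncomputable def Ck (k i : ℕ) : ℝ :=
  2 * (-1)^k * (k.factorial : ℝ) * ((-1)^i / ((i.factorial : ℝ) * ((k - 2*i).factorial : ℝ)))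

lemma Ck_zero (k : ℕ) : Ck k 0 = 2 * (-1)^k := by
  unfold Ck
  simp [Nat.factorial_ne_zero]

lemma coeff_id (k j : ℕ) (hj1 : 1 ≤ j) (hj : 2*j ≤ k) :
    Ck k (j-1) * (2*((k:ℝ) - 2*(j-1))) - Ck k j = Ck (k+1) j := by
  obtain ⟨a, rfl⟩ : ∃ a, j = a + 1 := ⟨j - 1, by omega⟩
  obtain ⟨d, rfl⟩ : ∃ d, k = 2*(a+1) + d := ⟨k - 2*(a+1), by omega⟩
  unfold Ck
  simp only [show (a+1)-1 = a from rfl,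
    show 2*(a+1)+d - 2*a = d+2 by omega,
    show 2*(a+1)+d - 2*(a+1) = d by omega,
    show 2*(a+1)+d+1 - 2*(a+1) = d+1 by omega,
    Nat.factorial_succ]
  have h1 : ((a.factorial : ℝ)) ≠ 0 := by positivity
  have h2 : ((d.factorial : ℝ)) ≠ 0 := by positivity
  have h3 : (((2*(a+1)+d).factorial : ℝ)) ≠ 0 := by positivity
  push_cast
  field_simp
  ring

lemma coeff_odd (n : ℕ) : Ck (2*n+1) n * 2 = Ck (2*n+1+1) (n+1) := by
  unfold Ck
  simp only [show 2*n+1 - 2*n = 1 by omega, show 2*n+1+1 - 2*(n+1) = 0 by omega,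
    Nat.factorial_one, Nat.factorial_zero, Nat.factorial_succ]
  have h1 : ((n.factorial : ℝ)) ≠ 0 := by positivity
  push_cast
  field_simp
  ring

lemma Ck_zero_succ (k : ℕ) : Ck (k+1) 0 = -Ck k 0 := by
  rw [Ck_zero, Ck_zero, pow_succ]; ring

lemma shift_split (n : ℕ) (p c q b : ℕ → ℝ)
    (h0 : q 0 = -c 0) (hmid : ∀ i < n, q (i+1) = p i - c (i+1)) :
    ∑ i ∈ Finset.range (n+1), (p i * b (i+1) - c i * b i)
      = ∑ j ∈ Finset.range (n+1), q j * b j + p n * b (n+1) := by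
  induction n with
  | zero => simp [h0]; ring
  | succ n ih =>
    rw [Finset.sum_range_succ, ih (fun i hi => hmid i (by omega)),
      Finset.sum_range_succ _ (n+1), hmid n (by omega)]
    ring

lemma sum_step (k : ℕ) (b : ℕ → ℝ) :
    ∑ i ∈ Finset.range (k/2+1),
      (Ck k i * (2*((k:ℝ)-2*i)) * b (i+1) - Ck k i * b i)
    = ∑ j ∈ Finset.range ((k+1)/2+1), Ck (k+1) j * b j := by
  have coeff : ∀ i : ℕ, 2*(i+1) ≤ k →
      Ck (k+1) (i+1) = Ck k i * (2*((k:ℝ)-2*i)) - Ck k (i+1) := by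
    intro i h
    have := coeff_id k (i+1) (by omega) h
    simp only [Nat.add_sub_cancel] at this
    push_cast at this ⊢
    linarith [this]
  rw [shift_split (k/2) (fun i => Ck k i * (2*((k:ℝ)-2*i))) (fun i => Ck k i)
    (fun j => Ck (k+1) j) b (by simpa using Ck_zero_succ k)
    (fun i hi => coeff i (by omega))]
  rcases Nat.even_or_odd k with ⟨n, hn⟩ | ⟨n, hn⟩
  · have hk : k = 2*n := by omega
    subst hk
    have h2 : (2*n)/2 = n := by omega
    have h3 : (2*n+1)/2 = n := by omega
    rw [h2, h3]
    have hzero : (((2*n:ℕ):ℝ) - 2*(n:ℝ)) = 0 := by push_cast; ring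
    rw [hzero]
    simp
  · have hk : k = 2*n+1 := by omega
    subst hk
    have h2 : (2*n+1)/2 = n := by omega
    have h3 : (2*n+1+1)/2 = n+1 := by omega
    rw [h2, h3, Finset.sum_range_succ]
    have hp : Ck (2*n+1) n * (2*(((2*n+1:ℕ):ℝ)-2*n)) = Ck (2*n+1+1) (n+1) := by
      rw [← coeff_odd n]
      push_cast
      ring
    rw [hp, Finset.sum_range_succ (fun j => Ck (2*n+1+1) j * b j) (n+1),
      Finset.sum_range_succ (fun j => Ck (2*n+1+1) j * b j) n]

lemma main_formula (k : ℕ) : ∀ z : ℝ, z ≠ 0 →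
    iteratedDeriv k besselJ1div z
      = ∑ i ∈ Finset.range (k/2+1), Ck k i * (besselJ (k+1-i) z / (2*z)^(i+1)) := by
  induction k with
  | zero =>
    intro z hz
    rw [iteratedDeriv_zero, besselJ1div_eq hz]
    simp only [Nat.zero_div, zero_add, Finset.sum_range_one, Ck_zero, pow_zero, pow_one]
    field_simp
  | succ k ih =>
    intro z hz
    rw [iteratedDeriv_succ]
    have hev : iteratedDeriv k besselJ1div =ᶠ[nhds z]
        (fun w => ∑ i ∈ Finset.range (k/2+1), Ck k i * (besselJ (k+1-i) w / (2*w)^(i+1))) := by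
      filter_upwards [eventually_ne_nhds hz] with w hw using ih w hw
    rw [hev.deriv_eq]
    set b : ℕ → ℝ := fun j => besselJ (k+2-j) z / (2*z)^(j+1) with hb
    have hD : HasDerivAt
        (fun w => ∑ i ∈ Finset.range (k/2+1), Ck k i * (besselJ (k+1-i) w / (2*w)^(i+1)))
        (∑ i ∈ Finset.range (k/2+1),
          (Ck k i * (2*((k:ℝ)-2*i)) * b (i+1) - Ck k i * b i)) z := by
      apply HasDerivAt.fun_sum
      intro i hi
      have hi' : 2*i ≤ k := by
        have := Finset.mem_range.mp hi
        omega
      have h := (term_hasDerivAt (k+1-i) i hz).const_mul (Ck k i)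
      have e2 : k+1-i+1 = k+2-i := by omega
      rw [e2] at h
      refine h.congr_deriv ?_
      have e1 : k+2-(i+1) = k+1-i := by omega
      have e3 : ((k+1-i : ℕ):ℝ) = (k:ℝ)+1-i := by
        have h4 : i ≤ k+1 := by omega
        push_cast [h4]
        ring
      rw [hb]
      simp only [e1]
      rw [e3]
      have h2z : (2*z) ≠ 0 := by simpa using hz
      field_simp
      ring
    rw [hD.deriv, sum_step k b]

/-- for `z ≠ 0`,
`d^k/dz^k [J₁(z)/z] = 2 (-1)^k k! ∑_{i=0}^{⌊k/2⌋} (-1)^i/(i!(k-2i)!) · J_{k+1-i}(z)/(2z)^{i+1}`. -/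
theorem iteratedDeriv_besselJ1div (k : ℕ) (z : ℝ) (hz : z ≠ 0) :
    iteratedDeriv k besselJ1div z =
      2 * (-1)^k * (k.factorial : ℝ) *
        ∑ i ∈ Finset.range (k / 2 + 1),
          (-1)^i / ((i.factorial : ℝ) * ((k - 2 * i).factorial : ℝ)) *
            (besselJ (k + 1 - i) z / (2 * z)^(i + 1)) := by
  rw [main_formula k z hz, Finset.mul_sum]
  refine Finset.sum_congr rfl fun i _ => ?_
  unfold Ck
  ring
end

section
/- Let C_n(ν,z) be defined by C₀(ν,z)=1, C₁(ν,z)=2(ν-1)/z, C_n(ν,z) = (2(ν-n)/z)·C_{n-1}(ν,z) - C_{n-2}(ν,z). Then for every integer ν ≥ 2 and z ≠ 0, C_{ν-1}(ν,z) = ∑_{j=0}^{⌈(ν-1)/2⌉} (Γ(ν-j)²/Γ(ν-2j)) · ((-1)^j/(j!)²) · (2/z)^{ν-1-2j}, where terms with Γ evaluated at nonpositive integers in the denominator are interpreted as zero. -/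
open Real Finset

/-- The coefficients `C_n(ν,z)`: `C₀ = 1`, `C₁ = 2(ν-1)/z`,
`C_n = (2(ν-n)/z) C_{n-1} - C_{n-2}`. -/
noncomputable def lomC (ν z : ℝ) : ℕ → ℝ
  | 0 => 1
  | 1 => 2 * (ν - 1) / z
  | (n + 2) => (2 * (ν - (n + 2)) / z) * lomC ν z (n + 1) - lomC ν z n

noncomputable def lomA (ν n j : ℕ) : ℝ :=
  (-1) ^ j * (Nat.factorial (ν - 1 - j)) * (Nat.factorial (n - j)) /
    ((Nat.factorial (ν - 1 - n + j)) * (Nat.factorial j) * (Nat.factorial (n - 2 * j)))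

lemma fct_ne (m : ℕ) : ((Nat.factorial m : ℝ)) ≠ 0 :=
  Nat.cast_ne_zero.2 (Nat.factorial_ne_zero m)

lemma lomA_eq (ν n j a b c d : ℕ) (h1 : ν - 1 - j = a) (h2 : n - j = b)
    (h3 : ν - 1 - n + j = c) (h4 : n - 2 * j = d) :
    lomA ν n j = (-1) ^ j * (Nat.factorial a) * (Nat.factorial b) /
      ((Nat.factorial c) * (Nat.factorial j) * (Nat.factorial d)) := by
  simp only [lomA, h1, h2, h3, h4]

lemma lomA_rec (ν n j : ℕ) (hν : n + 3 ≤ ν) (hj : j ≤ n / 2 + 1) (c : ℝ) :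
    lomA ν (n + 2) j * c ^ (n + 2 - 2 * j)
      = ((ν : ℝ) - (↑(n + 2) : ℝ)) * c * (if j ≤ (n + 1) / 2 then lomA ν (n + 1) j * c ^ (n + 1 - 2 * j) else 0)
        - (if 1 ≤ j then lomA ν n (j - 1) * c ^ (n - 2 * (j - 1)) else 0) := by
  rcases j with _ | i
  · -- j = 0
    obtain ⟨e, rfl⟩ : ∃ e, ν = n + 3 + e := ⟨ν - (n + 3), by omega⟩
    rw [if_pos (by omega), if_neg (by omega)]
    rw [lomA_eq _ _ _ (n + 2 + e) (n + 2) e (n + 2) (by omega) (by omega) (by omega) (by omega)]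
    rw [lomA_eq _ _ _ (n + 2 + e) (n + 1) (e + 1) (n + 1) (by omega) (by omega) (by omega) (by omega)]
    rw [show n + 2 - 2 * 0 = (n + 1) + 1 by omega, show n + 1 - 2 * 0 = n + 1 by omega]
    rw [Nat.factorial_succ e, pow_succ]
    push_cast
    field_simp
    ring
  · rcases (by omega : 2 * (i + 1) ≤ n ∨ n = 2 * i + 1 ∨ n = 2 * i) with hcase | hcase | hcase
    · -- generic case
      obtain ⟨k, rfl⟩ : ∃ k, n = 2 * i + k + 2 := ⟨n - (2 * i + 2), by omega⟩
      obtain ⟨e, rfl⟩ : ∃ e, ν = 2 * i + k + 5 + e := ⟨ν - (2 * i + k + 5), by omega⟩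
      rw [if_pos (by omega), if_pos (by omega)]
      rw [lomA_eq _ _ _ (i + k + e + 3) (i + k + 2 + 1) (e + i + 1) (k + 1 + 1)
        (by omega) (by omega) (by omega) (by omega)]
      rw [lomA_eq _ _ _ (i + k + e + 3) (i + k + 2) (e + i + 1 + 1) (k + 1)
        (by omega) (by omega) (by omega) (by omega)]
      rw [lomA_eq _ _ _ (i + k + e + 3 + 1) (i + k + 2) (e + i + 1 + 1) (k + 1 + 1)
        (by omega) (by omega) (by omega) (by omega)]
      rw [show 2 * i + k + 2 + 2 - 2 * (i + 1) = (k + 1) + 1 by omega,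
        show 2 * i + k + 2 + 1 - 2 * (i + 1) = k + 1 by omega,
        show 2 * i + k + 2 - 2 * (i + 1 - 1) = (k + 1) + 1 by omega,
        show i + 1 - 1 = i by omega]
      rw [Nat.factorial_succ (i + k + 2), Nat.factorial_succ (e + i + 1),
        Nat.factorial_succ (i + k + e + 3), Nat.factorial_succ (k + 1),
        Nat.factorial_succ i, pow_succ c (k + 1), pow_succ (-1 : ℝ) i]
      push_cast
      field_simp
      ring
    · -- n = 2i+1
      subst hcase
      obtain ⟨e, rfl⟩ : ∃ e, ν = 2 * i + 4 + e := ⟨ν - (2 * i + 4), by omega⟩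
      rw [if_pos (by omega), if_pos (by omega)]
      rw [lomA_eq _ _ _ (i + e + 1 + 1) (i + 1 + 1) (i + e + 1) 1
        (by omega) (by omega) (by omega) (by omega)]
      rw [lomA_eq _ _ _ (i + e + 1 + 1) (i + 1) (i + e + 1 + 1) 0
        (by omega) (by omega) (by omega) (by omega)]
      rw [lomA_eq _ _ _ (i + e + 1 + 1 + 1) (i + 1) (i + e + 1 + 1) 1
        (by omega) (by omega) (by omega) (by omega)]
      rw [show 2 * i + 1 + 2 - 2 * (i + 1) = 1 by omega,
        show 2 * i + 1 + 1 - 2 * (i + 1) = 0 by omega,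
        show 2 * i + 1 - 2 * (i + 1 - 1) = 1 by omega,
        show i + 1 - 1 = i by omega]
      rw [Nat.factorial_succ (i + e + 1 + 1), Nat.factorial_succ (i + e + 1),
        Nat.factorial_succ (i + 1), Nat.factorial_succ i, pow_succ (-1 : ℝ) i]
      push_cast
      field_simp
      ring
    · -- n = 2i
      subst hcase
      obtain ⟨e, rfl⟩ : ∃ e, ν = 2 * i + 3 + e := ⟨ν - (2 * i + 3), by omega⟩
      rw [if_neg (by omega), if_pos (by omega)]
      rw [lomA_eq _ _ _ (i + e + 1) (i + 1) (i + e + 1) 0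
        (by omega) (by omega) (by omega) (by omega)]
      rw [lomA_eq _ _ _ (i + e + 2) i (i + e + 2) 0
        (by omega) (by omega) (by omega) (by omega)]
      rw [show 2 * i + 2 - 2 * (i + 1) = 0 by omega,
        show 2 * i - 2 * (i + 1 - 1) = 0 by omega,
        show i + 1 - 1 = i by omega]
      rw [Nat.factorial_succ i, pow_succ (-1 : ℝ) i]
      push_cast
      field_simp
      ring

lemma sum_ite_le {M K : ℕ} (h : K + 1 ≤ M) (f : ℕ → ℝ) :
    ∑ j ∈ range M, (if j ≤ K then f j else 0) = ∑ j ∈ range (K + 1), f j := by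
  rw [← Finset.sum_subset (Finset.range_subset_range.2 h)
    (fun x _ hx => if_neg (by simp only [Finset.mem_range] at hx; omega))]
  exact Finset.sum_congr rfl fun x hx => if_pos (by simp only [Finset.mem_range] at hx; omega)

lemma lomC_eq_sum (ν : ℕ) (z : ℝ) (hz : z ≠ 0) :
    ∀ n, n + 1 ≤ ν → lomC (ν : ℝ) z n = ∑ j ∈ range (n / 2 + 1), lomA ν n j * (2 / z) ^ (n - 2 * j) := by
  intro n
  induction n using Nat.strong_induction_on with
  | _ n ih =>
    match n, ih with
    | 0, _ =>
      intro _
      rw [show (0 : ℕ) / 2 + 1 = 1 by norm_num, Finset.sum_range_one,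
        lomA_eq _ _ _ (ν - 1) 0 (ν - 1) 0 (by omega) (by omega) (by omega) (by omega)]
      simp only [lomC, pow_zero, Nat.factorial_zero, Nat.cast_one, mul_one, one_mul]
      rw [div_self (by simpa using fct_ne (ν - 1))]
      norm_num
    | 1, _ =>
      intro h
      obtain ⟨e, rfl⟩ : ∃ e, ν = e + 2 := ⟨ν - 2, by omega⟩
      rw [show (1 : ℕ) / 2 + 1 = 1 by norm_num, Finset.sum_range_one,
        lomA_eq _ _ _ (e + 1) 1 e 1 (by omega) (by omega) (by omega) (by omega)]
      simp only [lomC]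
      rw [Nat.factorial_succ e]
      push_cast
      field_simp
      ring
    | (n + 2), ih =>
      intro h
      rw [lomC, ih (n + 1) (by omega) (by omega), ih n (by omega) (by omega)]
      rw [show (n + 2) / 2 + 1 = n / 2 + 2 by omega]
      rw [Finset.sum_congr rfl (fun j hj =>
        lomA_rec ν n j (by omega) (by simp only [Finset.mem_range] at hj; omega) (2 / z))]
      rw [Finset.sum_sub_distrib, ← Finset.mul_sum]
      rw [sum_ite_le (by omega) (fun j => lomA ν (n + 1) j * (2 / z) ^ (n + 1 - 2 * j))]
      rw [Finset.sum_range_succ' (fun j => if 1 ≤ j then lomA ν n (j - 1) * (2 / z) ^ (n - 2 * (j - 1)) else 0) (n / 2 + 1)]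
      simp only [Nat.le_add_left, if_pos, Nat.add_sub_cancel, if_neg (by omega : ¬ (1 ≤ 0)), add_zero]
      push_cast
      ring

lemma lomA_term_eq (ν : ℕ) (z : ℝ) (j : ℕ) (hj : j ≤ (ν - 1) / 2) (hν : 2 ≤ ν) :
    lomA ν (ν - 1) j * (2 / z) ^ (ν - 1 - 2 * j)
      = (Real.Gamma ((ν : ℝ) - j)^2 / Real.Gamma ((ν : ℝ) - 2 * j)) *
          ((-1)^j / ((j.factorial : ℝ))^2) * (2 / z)^((ν : ℤ) - 1 - 2 * j) := by
  have hjν : 2 * j + 1 ≤ ν := by omega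
  have c1 : ((ν : ℝ) - j) = ((ν - 1 - j : ℕ) : ℝ) + 1 := by
    rw [Nat.cast_sub (by omega : j ≤ ν - 1), Nat.cast_sub (by omega : 1 ≤ ν)]
    push_cast; ring
  have c2 : ((ν : ℝ) - 2 * j) = ((ν - 1 - 2 * j : ℕ) : ℝ) + 1 := by
    rw [Nat.cast_sub (by omega : 2 * j ≤ ν - 1), Nat.cast_sub (by omega : 1 ≤ ν)]
    push_cast; ring
  have z1 : (2 / z) ^ ((ν : ℤ) - 1 - 2 * j) = (2 / z) ^ (ν - 1 - 2 * j : ℕ) := by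
    rw [show (ν : ℤ) - 1 - 2 * j = ((ν - 1 - 2 * j : ℕ) : ℤ) by omega, zpow_natCast]
  rw [c1, c2, z1, Real.Gamma_nat_eq_factorial, Real.Gamma_nat_eq_factorial,
    lomA_eq ν (ν - 1) j (ν - 1 - j) (ν - 1 - j) j (ν - 1 - 2 * j)
      rfl (by omega) (by omega) rfl]
  ring

/-- for `ν ≥ 2` and `z ≠ 0`,
`C_{ν-1}(ν,z) = ∑_{j=0}^{⌈(ν-1)/2⌉} (Γ(ν-j)²/Γ(ν-2j)) ((-1)^j/(j!)²) (2/z)^{ν-1-2j}`,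
where `1/Γ` vanishes at nonpositive integers (`Real.Gamma` is zero there).
Note `⌈(ν-1)/2⌉ = ν/2` (natural division) for `ν ≥ 1`. -/
theorem lomC_eq_lommel_R1 (ν : ℕ) (hν : 2 ≤ ν) (z : ℝ) (hz : z ≠ 0) :
    lomC (ν : ℝ) z (ν - 1) =
      ∑ j ∈ Finset.range (ν / 2 + 1),
        (Real.Gamma ((ν : ℝ) - j)^2 / Real.Gamma ((ν : ℝ) - 2 * j)) *
          ((-1)^j / ((j.factorial : ℝ))^2) * (2 / z)^((ν : ℤ) - 1 - 2 * j) := by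
  rw [lomC_eq_sum ν z hz (ν - 1) (by omega)]
  rcases Nat.even_or_odd ν with ⟨r, rfl⟩ | ⟨r, rfl⟩
  · -- ν = r + r, even
    have hr : 1 ≤ r := by omega
    conv_rhs => rw [show (r + r) / 2 + 1 = ((r + r - 1) / 2 + 1) + 1 by omega,
      Finset.sum_range_succ]
    have hzero : (Real.Gamma ((↑(r + r) : ℝ) - ((r + r - 1) / 2 + 1 : ℕ))^2 /
          Real.Gamma ((↑(r + r) : ℝ) - 2 * ((r + r - 1) / 2 + 1 : ℕ))) *
        ((-1)^((r + r - 1) / 2 + 1) / ((((r + r - 1) / 2 + 1 : ℕ).factorial : ℝ))^2) *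
        (2 / z)^((↑(r + r) : ℤ) - 1 - 2 * ((r + r - 1) / 2 + 1 : ℕ)) = 0 := by
      have h0 : ((↑(r + r) : ℝ) - 2 * ((r + r - 1) / 2 + 1 : ℕ)) = 0 := by
        rw [show ((r + r - 1) / 2 + 1 : ℕ) = r by omega]
        push_cast; ring
      rw [h0, Real.Gamma_zero, div_zero, zero_mul, zero_mul]
    rw [hzero, add_zero]
    exact Finset.sum_congr rfl fun j hj =>
      lomA_term_eq _ _ _ (by simp only [Finset.mem_range] at hj; omega) (by omega)
  · -- ν = 2r + 1, odd
    rw [show (2 * r + 1) / 2 + 1 = (2 * r + 1 - 1) / 2 + 1 by omega]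
    exact Finset.sum_congr rfl fun j hj =>
      lomA_term_eq _ _ _ (by simp only [Finset.mem_range] at hj; omega) (by omega)
end
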